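/- In GL(3,ℤ), the commutator relation [E₂₁F₂E₁₂F₁E₃₁⁻¹E₃₂, E₃₁F₃E₁₃F₁E₂₁⁻¹E₂₃] = 1 holds, where [X,Y] = X⁻¹Y⁻¹XY. -/

import Mathlib

open Matrix

def Gamma2 (n : ℕ) : Subgroup (GL (Fin n) ℤ) :=
  (Matrix.GeneralLinearGroup.map (n := Fin n) (Int.castRingHom (ZMod 2))).ker

noncomputable def Emat (n : ℕ) (i j : Fin n) : Matrix (Fin n) (Fin n) ℤ :=
  1 + 2 • Matrix.single i j 1

noncomputable def Fmat (n : ℕ) (i : Fin n) : Matrix (Fin n) (Fin n) ℤ :=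
  1 - 2 • Matrix.single i i 1

lemma val_inv_of (u : GL (Fin 3) ℤ) (M : Matrix (Fin 3) (Fin 3) ℤ)
    (h : (u : Matrix (Fin 3) (Fin 3) ℤ) * M = 1)
    (h' : M * (u : Matrix (Fin 3) (Fin 3) ℤ) = 1) :
    ((u⁻¹ : GL (Fin 3) ℤ) : Matrix (Fin 3) (Fin 3) ℤ) = M := by
  have hu : u⁻¹ = (⟨M, u, h', h⟩ : GL (Fin 3) ℤ) := by
    apply inv_eq_of_mul_eq_one_right
    exact Units.ext h
  rw [hu]

lemma Einv (i j : Fin 3) (hij : i ≠ j) :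
    Emat 3 i j * (1 - 2 • Matrix.single i j 1) = 1 := by
  have h0 : Matrix.single i j (1:ℤ) * Matrix.single i j 1 = 0 :=
    Matrix.single_mul_single_of_ne (c := (1:ℤ)) i j i (fun h => hij h.symm) 1
  have h2 : Matrix.single i j (2:ℤ) * Matrix.single i j 2 = 0 :=
    Matrix.single_mul_single_of_ne (c := (2:ℤ)) i j i (fun h => hij h.symm) 2
  simp [Emat, mul_sub, add_mul, Matrix.smul_mul, Matrix.mul_smul, h0, h2]

lemma Einv' (i j : Fin 3) (hij : i ≠ j) :
    (1 - 2 • Matrix.single i j 1) * Emat 3 i j = 1 := by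
  have h0 : Matrix.single i j (1:ℤ) * Matrix.single i j 1 = 0 :=
    Matrix.single_mul_single_of_ne (c := (1:ℤ)) i j i (fun h => hij h.symm) 1
  have h2 : Matrix.single i j (2:ℤ) * Matrix.single i j 2 = 0 :=
    Matrix.single_mul_single_of_ne (c := (2:ℤ)) i j i (fun h => hij h.symm) 2
  simp [Emat, sub_mul, mul_add, Matrix.smul_mul, Matrix.mul_smul, h0, h2]

lemma lit_gen (a b c d e f g h i : ℤ) (M : Matrix (Fin 3) (Fin 3) ℤ)
    (h00 : M 0 0 = a) (h01 : M 0 1 = b) (h02 : M 0 2 = c)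
    (h10 : M 1 0 = d) (h11 : M 1 1 = e) (h12 : M 1 2 = f)
    (h20 : M 2 0 = g) (h21 : M 2 1 = h) (h22 : M 2 2 = i) :
    M = !![a,b,c;d,e,f;g,h,i] := by
  ext x y
  fin_cases x <;> fin_cases y <;> simpa

theorem lantern_type_relation
    (E12 E13 E21 E23 E31 E32 F1 F2 F3 : GL (Fin 3) ℤ)
    (h12 : (E12 : Matrix (Fin 3) (Fin 3) ℤ) = Emat 3 0 1)
    (h13 : (E13 : Matrix (Fin 3) (Fin 3) ℤ) = Emat 3 0 2)
    (h21 : (E21 : Matrix (Fin 3) (Fin 3) ℤ) = Emat 3 1 0)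
    (h23 : (E23 : (Matrix (Fin 3) (Fin 3) ℤ)) = Emat 3 1 2)
    (h31 : (E31 : Matrix (Fin 3) (Fin 3) ℤ) = Emat 3 2 0)
    (h32 : (E32 : Matrix (Fin 3) (Fin 3) ℤ) = Emat 3 2 1)
    (hF1 : (F1 : Matrix (Fin 3) (Fin 3) ℤ) = Fmat 3 0)
    (hF2 : (F2 : Matrix (Fin 3) (Fin 3) ℤ) = Fmat 3 1)
    (hF3 : (F3 : Matrix (Fin 3) (Fin 3) ℤ) = Fmat 3 2) :
    (E21 * F2 * E12 * F1 * E31⁻¹ * E32)⁻¹ * (E31 * F3 * E13 * F1 * E21⁻¹ * E23)⁻¹ *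
      (E21 * F2 * E12 * F1 * E31⁻¹ * E32) * (E31 * F3 * E13 * F1 * E21⁻¹ * E23) = 1 := by
  have hi31 : ((E31⁻¹ : GL (Fin 3) ℤ) : Matrix (Fin 3) (Fin 3) ℤ)
      = 1 - 2 • Matrix.single 2 0 1 := by
    apply val_inv_of
    · rw [h31]; exact Einv 2 0 (by decide)
    · rw [h31]; exact Einv' 2 0 (by decide)
  have hi21 : ((E21⁻¹ : GL (Fin 3) ℤ) : Matrix (Fin 3) (Fin 3) ℤ)
      = 1 - 2 • Matrix.single 1 0 1 := by
    apply val_inv_of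
    · rw [h21]; exact Einv 1 0 (by decide)
    · rw [h21]; exact Einv' 1 0 (by decide)
  have key : (E21 * F2 * E12 * F1 * E31⁻¹ * E32) * (E31 * F3 * E13 * F1 * E21⁻¹ * E23)
      = (E31 * F3 * E13 * F1 * E21⁻¹ * E23) * (E21 * F2 * E12 * F1 * E31⁻¹ * E32) := by
    have lE12 : Emat 3 0 1 = !![1,2,0;0,1,0;0,0,1] := by
      apply lit_gen <;> simp [Emat, Matrix.single, Matrix.one_apply]
    have lE13 : Emat 3 0 2 = !![1,0,2;0,1,0;0,0,1] := by
      apply lit_gen <;> simp [Emat, Matrix.single, Matrix.one_apply]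
    have lE21 : Emat 3 1 0 = !![1,0,0;2,1,0;0,0,1] := by
      apply lit_gen <;> simp [Emat, Matrix.single, Matrix.one_apply]
    have lE23 : Emat 3 1 2 = !![1,0,0;0,1,2;0,0,1] := by
      apply lit_gen <;> simp [Emat, Matrix.single, Matrix.one_apply]
    have lE31 : Emat 3 2 0 = !![1,0,0;0,1,0;2,0,1] := by
      apply lit_gen <;> simp [Emat, Matrix.single, Matrix.one_apply]
    have lE32 : Emat 3 2 1 = !![1,0,0;0,1,0;0,2,1] := by
      apply lit_gen <;> simp [Emat, Matrix.single, Matrix.one_apply]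
    have lF1 : Fmat 3 0 = !![-1,0,0;0,1,0;0,0,1] := by
      apply lit_gen <;> simp [Fmat, Matrix.single, Matrix.one_apply]
    have lF2 : Fmat 3 1 = !![1,0,0;0,-1,0;0,0,1] := by
      apply lit_gen <;> simp [Fmat, Matrix.single, Matrix.one_apply]
    have lF3 : Fmat 3 2 = !![1,0,0;0,1,0;0,0,-1] := by
      apply lit_gen <;> simp [Fmat, Matrix.single, Matrix.one_apply]
    have lI31 : (1 - 2 • Matrix.single 2 0 1 : Matrix (Fin 3) (Fin 3) ℤ)
        = !![1,0,0;0,1,0;-2,0,1] := by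
      apply lit_gen <;> simp [Matrix.single, Matrix.one_apply]
    have lI21 : (1 - 2 • Matrix.single 1 0 1 : Matrix (Fin 3) (Fin 3) ℤ)
        = !![1,0,0;-2,1,0;0,0,1] := by
      apply lit_gen <;> simp [Matrix.single, Matrix.one_apply]
    apply Units.ext
    simp only [Units.val_mul, h12, h13, h21, h23, h31, h32, hF1, hF2, hF3, hi31, hi21,
      lE12, lE13, lE21, lE23, lE31, lE32, lF1, lF2, lF3, lI31, lI21]
    norm_num [Matrix.mul_fin_three]
  calc (E21 * F2 * E12 * F1 * E31⁻¹ * E32)⁻¹ * (E31 * F3 * E13 * F1 * E21⁻¹ * E23)⁻¹ *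
      (E21 * F2 * E12 * F1 * E31⁻¹ * E32) * (E31 * F3 * E13 * F1 * E21⁻¹ * E23)
      = (E21 * F2 * E12 * F1 * E31⁻¹ * E32)⁻¹ * (E31 * F3 * E13 * F1 * E21⁻¹ * E23)⁻¹ *
        ((E21 * F2 * E12 * F1 * E31⁻¹ * E32) * (E31 * F3 * E13 * F1 * E21⁻¹ * E23)) := by
        group
    _ = (E21 * F2 * E12 * F1 * E31⁻¹ * E32)⁻¹ * (E31 * F3 * E13 * F1 * E21⁻¹ * E23)⁻¹ *
        ((E31 * F3 * E13 * F1 * E21⁻¹ * E23) * (E21 * F2 * E12 * F1 * E31⁻¹ * E32)) := by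
        rw [key]
    _ = 1 := by group
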